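/- Ideal membership via normal forms: let ≻ be an admissible ordering and let G be a standard basis of the difference ideal I. Then for every f ∈ R, f ∈ I if and only if 0 is a normal form of f modulo G; equivalently, every normal form of f modulo G equals 0 exactly when f ∈ I. -/

import Mathlib

/-- The free commutative monoid of shifts `Θ`. -/
abbrev Shift (n : ℕ) := Fin n → ℕ

/-- The set of difference variables `V = Θ × Fin m`. -/
abbrev DVar (n m : ℕ) := (Fin n → ℕ) × Fin m

/-- The additive commutative monoid of difference monomials `M = V →₀ ℕ`. -/
abbrev DMon (n m : ℕ) := DVar n m →₀ ℕ

/-- Action of a shift `θ` on a difference variable: `θ • (θ', α) = (θ + θ', α)`. -/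
def shiftV {n m : ℕ} (θ : Shift n) (v : DVar n m) : DVar n m := (θ + v.1, v.2)

/-- Action of a shift `θ` on a difference monomial. -/
noncomputable def shiftM {n m : ℕ} (θ : Shift n) (w : DMon n m) : DMon n m :=
  Finsupp.mapDomain (shiftV θ) w

/-- Divisibility of difference monomials: `v ∣ w` iff `w = t + θ • v`. -/
def MDvd {n m : ℕ} (v w : DMon n m) : Prop :=
  ∃ (t : DMon n m) (θ : Shift n), w = t + shiftM θ v

/-- The action of the shift `θ` on the difference polynomial ring
`R = MvPolynomial (DVar n m) K`: the ring endomorphism `σ^θ` applying the given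
endomorphism `σK θ` of `K` to coefficients and `θ • ·` to variables. -/
noncomputable def sigmaR {n m : ℕ} {K : Type} [Field K] (σK : Shift n → (K →+* K))
    (θ : Shift n) :
    MvPolynomial (DVar n m) K →+* MvPolynomial (DVar n m) K :=
  MvPolynomial.eval₂Hom (MvPolynomial.C.comp (σK θ)) fun v => MvPolynomial.X (shiftV θ v)

/-- An admissible ordering on difference monomials: a (strict) linear order `lt` such that
`m ≻ 0` for `m ≠ 0`, compatible with addition of monomials and the action of shifts,
and extending a ranking on the variables. -/
structure Admissible (n m : ℕ) where
  lt : DMon n m → DMon n m → Prop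
  irrefl : ∀ a, ¬ lt a a
  trans : ∀ a b c, lt a b → lt b c → lt a c
  trichotomy : ∀ a b, lt a b ∨ a = b ∨ lt b a
  pos : ∀ a : DMon n m, a ≠ 0 → lt 0 a
  compat : ∀ (v w t : DMon n m) (θ : Shift n), lt v w ↔ lt (t + shiftM θ v) (t + shiftM θ w)
  ranking : ∀ (θ : Shift n) (i : Fin n) (α : Fin m),
    lt (Finsupp.single (θ, α) 1) (Finsupp.single (θ + Pi.single i 1, α) 1)

/-- `w` is the leading monomial of `f` w.r.t. the ordering `ord`:
it occurs in `f` and is `ord`-greater than any other monomial of `f`. -/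
def IsLm {n m : ℕ} {K : Type} [Field K] (ord : Admissible n m)
    (f : MvPolynomial (DVar n m) K) (w : DMon n m) : Prop :=
  w ∈ f.support ∧ ∀ w' ∈ f.support, w' ≠ w → ord.lt w' w

/-- `f` is monic: its leading coefficient equals `1`. -/
def IsMonicP {n m : ℕ} {K : Type} [Field K] (ord : Admissible n m)
    (f : MvPolynomial (DVar n m) K) : Prop :=
  ∃ w, IsLm ord f w ∧ f.coeff w = 1

/-- Elementary reduction step modulo the set `F`: for some `q ∈ F` with leading monomial
`lq`, and a monomial `w = t + θ • lq` occurring in `p` with coefficient `c`, subtract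
`c · X^t · σ^θ(q)` from `p`, thereby removing the monomial `w`. -/
def RedStep {n m : ℕ} {K : Type} [Field K] (σK : Shift n → (K →+* K)) (ord : Admissible n m)
    (F : Set (MvPolynomial (DVar n m) K)) (p r : MvPolynomial (DVar n m) K) : Prop :=
  ∃ q ∈ F, ∃ lq, IsLm ord q lq ∧ ∃ (t : DMon n m) (θ : Shift n),
    (t + shiftM θ lq) ∈ p.support ∧
    r = p - MvPolynomial.monomial t (p.coeff (t + shiftM θ lq)) * sigmaR σK θ q

/-- `r` is in normal form modulo `F`: no monomial of `r` is divisible by the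
leading monomial of any element of `F`. -/
def InNormalForm {n m : ℕ} {K : Type} [Field K] (ord : Admissible n m)
    (F : Set (MvPolynomial (DVar n m) K)) (r : MvPolynomial (DVar n m) K) : Prop :=
  ∀ w ∈ r.support, ¬ ∃ q ∈ F, ∃ lq, IsLm ord q lq ∧ MDvd lq w

/-- `r` is a normal form of `p` modulo `G`: `r` is reached from `p` by finitely many
elementary reduction steps modulo elements of `G` and `r` is in normal form modulo `G`. -/
def IsNormalFormOf {n m : ℕ} {K : Type} [Field K] (σK : Shift n → (K →+* K))
    (ord : Admissible n m) (G : Set (MvPolynomial (DVar n m) K))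
    (p r : MvPolynomial (DVar n m) K) : Prop :=
  Relation.ReflTransGen (RedStep σK ord G) p r ∧ InNormalForm ord G r

/-- The smallest difference ideal `[F]` containing `F`: the ideal generated by
all shifts `σ^θ f` of elements `f ∈ F`. -/
noncomputable def diffIdealS {n m : ℕ} {K : Type} [Field K] (σK : Shift n → (K →+* K))
    (F : Set (MvPolynomial (DVar n m) K)) : Ideal (MvPolynomial (DVar n m) K) :=
  Ideal.span { g | ∃ (θ : Shift n) (f : MvPolynomial (DVar n m) K), f ∈ F ∧ g = sigmaR σK θ f }

/-- An ideal `I ⊆ R` is a difference ideal if it is stable under all shifts `σ^θ`. -/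
def IsDiffIdeal {n m : ℕ} {K : Type} [Field K] (σK : Shift n → (K →+* K))
    (I : Ideal (MvPolynomial (DVar n m) K)) : Prop :=
  ∀ (θ : Shift n), ∀ f ∈ I, sigmaR σK θ f ∈ I

/-- `s` is an S-polynomial associated to the monic nonzero polynomials `p` and `q`:
`s = X^{t₁} · σ^{θ₁}(p) − X^{t₂} · σ^{θ₂}(q)` where `t₁ + θ₁ • lm(p) = t₂ + θ₂ • lm(q)`
and this common monomial is minimal with respect to divisibility among all common
multiples of `lm(p)` and `lm(q)` of this form. -/
def IsSPoly {n m : ℕ} {K : Type} [Field K] (σK : Shift n → (K →+* K)) (ord : Admissible n m)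
    (p q s : MvPolynomial (DVar n m) K) : Prop :=
  ∃ lp lq, IsLm ord p lp ∧ IsLm ord q lq ∧
    ∃ (t₁ : DMon n m) (θ₁ : Shift n) (t₂ : DMon n m) (θ₂ : Shift n),
      t₁ + shiftM θ₁ lp = t₂ + shiftM θ₂ lq ∧
      (∀ (t₁' : DMon n m) (θ₁' : Shift n) (t₂' : DMon n m) (θ₂' : Shift n),
        t₁' + shiftM θ₁' lp = t₂' + shiftM θ₂' lq →
        MDvd (t₁' + shiftM θ₁' lp) (t₁ + shiftM θ₁ lp) →
        t₁' + shiftM θ₁' lp = t₁ + shiftM θ₁ lp) ∧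
      s = MvPolynomial.monomial t₁ (1 : K) * sigmaR σK θ₁ p
          - MvPolynomial.monomial t₂ (1 : K) * sigmaR σK θ₂ q

/-- `G` is a (difference) standard basis of the ideal `I`: `[G] = I` and the leading
monomial of every nonzero element of `I` is divisible by the leading monomial of
some element of `G`. -/
def IsStandardBasis {n m : ℕ} {K : Type} [Field K] (σK : Shift n → (K →+* K))
    (ord : Admissible n m) (G : Set (MvPolynomial (DVar n m) K))
    (I : Ideal (MvPolynomial (DVar n m) K)) : Prop :=
  diffIdealS σK G = I ∧
  ∀ f ∈ I, f ≠ 0 → ∃ g ∈ G, ∃ lg lf, IsLm ord g lg ∧ IsLm ord f lf ∧ MDvd lg lf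

-- ### shift basics
lemma shiftV_injective {n m : ℕ} (θ : Shift n) :
    Function.Injective (shiftV θ : DVar n m → DVar n m) := by
  rintro ⟨a, α⟩ ⟨b, β⟩ h
  simp only [shiftV, Prod.mk.injEq] at h
  exact Prod.ext (add_left_cancel h.1) h.2

lemma shiftM_zero {n m : ℕ} (w : DMon n m) : shiftM 0 w = w := by
  have : (shiftV 0 : DVar n m → DVar n m) = id := by
    funext v; simp [shiftV]
  simp [shiftM, this, Finsupp.mapDomain_id]

-- ### order type synonym
def OT (n m : ℕ) (_ord : Admissible n m) : Type := DMon n m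

def toOT {n m : ℕ} (ord : Admissible n m) (x : DMon n m) : OT n m ord := x

variable {n m : ℕ}

noncomputable instance (ord : Admissible n m) : AddCancelCommMonoid (OT n m ord) :=
  { (inferInstance : AddCommMonoid (DMon n m)) with
    add_left_cancel := (inferInstance : IsLeftCancelAdd (DMon n m)).add_left_cancel }

noncomputable instance OT.linearOrder (ord : Admissible n m) : LinearOrder (OT n m ord) where
  le a b := ord.lt a b ∨ a = b
  lt a b := ord.lt a b
  le_refl a := Or.inr rfl
  le_trans a b c hab hbc := by
    rcases hab with h | rfl
    · rcases hbc with h' | rfl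
      · exact Or.inl (ord.trans _ _ _ h h')
      · exact Or.inl h
    · exact hbc
  le_antisymm a b hab hba := by
    rcases hab with h | rfl
    · rcases hba with h' | rfl
      · exact absurd (ord.trans _ _ _ h h') (ord.irrefl _)
      · rfl
    · rfl
  lt_iff_le_not_ge a b := by
    constructor
    · intro h
      refine ⟨Or.inl h, ?_⟩
      rintro (h' | rfl)
      · exact ord.irrefl _ (ord.trans _ _ _ h h')
      · exact ord.irrefl _ h
    · rintro ⟨h | rfl, hn⟩
      · exact h
      · exact absurd (Or.inr rfl) hn
  le_total a b := by
    rcases ord.trichotomy a b with h | rfl | h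
    · exact Or.inl (Or.inl h)
    · exact Or.inl (Or.inr rfl)
    · exact Or.inr (Or.inl h)
  toDecidableLE := fun _ _ => Classical.dec _

lemma ord_compat0 (ord : Admissible n m) (a b t : DMon n m) :
    ord.lt a b ↔ ord.lt (t + a) (t + b) := by
  simpa [shiftM_zero] using ord.compat a b t 0

lemma ot_le_def (ord : Admissible n m) (a b : OT n m ord) :
    a ≤ b ↔ ord.lt a b ∨ a = b := Iff.rfl

lemma ot_lt_def (ord : Admissible n m) (a b : OT n m ord) :
    a < b ↔ ord.lt a b := Iff.rfl

noncomputable instance OT.ocam (ord : Admissible n m) :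
    IsOrderedCancelAddMonoid (OT n m ord) :=
  { add_le_add_left := by
      rintro a b (h | rfl) c
      · exact Or.inl (by rw [add_comm a c, add_comm b c]; exact (ord_compat0 ord a b c).mp h)
      · exact Or.inr rfl
    le_of_add_le_add_left := by
      rintro a b c (h | heq)
      · exact Or.inl ((ord_compat0 ord b c a).mpr h)
      · exact Or.inr (add_left_cancel heq) }

-- single step monotonicity
lemma single_le_single_aux (ord : Admissible n m) :
    ∀ (k : ℕ) (δ θ : Shift n) (α : Fin m), (∑ i, δ i) = k →
      toOT ord (Finsupp.single (θ, α) 1) ≤ toOT ord (Finsupp.single (θ + δ, α) 1) := by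
  intro k
  induction k with
  | zero =>
    intro δ θ α h
    have : δ = 0 := by
      funext i
      exact Finset.sum_eq_zero_iff.mp h i (Finset.mem_univ i)
    subst this
    exact le_of_eq (by rw [add_zero])
  | succ k ih =>
    intro δ θ α h
    have hδ : ∃ i, δ i ≠ 0 := by
      by_contra hc
      push_neg at hc
      simp [hc] at h
    obtain ⟨i, hi⟩ := hδ
    set δ' : Shift n := Function.update δ i (δ i - 1) with hδ'
    have hsum : (∑ j, δ' j) = k := by
      have h1 : (∑ j, δ' j) + 1 = (∑ j, δ j) := by
        rw [Finset.sum_update_of_mem (Finset.mem_univ i),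
          Finset.sdiff_singleton_eq_erase, ← Finset.add_sum_erase _ _ (Finset.mem_univ i)]
        omega
      omega
    have hstep : toOT ord (Finsupp.single (θ, α) 1) ≤
        toOT ord (Finsupp.single (θ + Pi.single i 1, α) 1) :=
      (ot_le_def ord _ _).mpr (Or.inl (ord.ranking θ i α))
    have hrest := ih δ' (θ + Pi.single i 1) α hsum
    have heq : θ + Pi.single i 1 + δ' = θ + δ := by
      funext j
      by_cases hj : j = i
      · subst hj
        simp only [Pi.add_apply, Pi.single_eq_same, hδ', Function.update_self]
        omega
      · simp [Pi.add_apply, Pi.single_eq_of_ne hj, hδ', Function.update_of_ne hj]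
    rw [heq] at hrest
    exact le_trans hstep hrest

lemma single_le_single (ord : Admissible n m) {θ θ' : Shift n} (α : Fin m) (h : θ ≤ θ') :
    toOT ord (Finsupp.single (θ, α) 1) ≤ toOT ord (Finsupp.single (θ', α) 1) := by
  have : θ' = θ + (θ' - θ) := by
    funext i
    have h2 : θ i ≤ θ' i := h i
    simp only [Pi.add_apply, Pi.sub_apply]
    omega
  rw [this]
  exact single_le_single_aux ord _ _ θ α rfl

instance : IsRefl (Fin m) (· = ·) := ⟨fun _ => rfl⟩


lemma genset_isPWO (ord : Admissible n m) :
    Set.IsPWO {x : OT n m ord | ∃ v : DVar n m, x = toOT ord (Finsupp.single v 1)} := by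
  haveI hwo : IsWellOrder ℕ (· < ·) := inferInstance
  haveI : ∀ i : Fin n, IsWellOrder ((fun _ : Fin n => ℕ) i) (· < ·) := fun _ => hwo
  have h1 : (Set.univ : Set (Shift n)).IsPWO :=
    Set.isPWO_univ_iff.mpr inferInstance
  have h2 : (Set.univ : Set (Fin m)).PartiallyWellOrderedOn (· = ·) :=
    Set.finite_univ.partiallyWellOrderedOn
  have h3 := Set.PartiallyWellOrderedOn.prod (r := ((· ≤ ·) : Shift n → Shift n → Prop)) (r' := ((· = ·) : Fin m → Fin m → Prop)) h1 h2
  have h4 := h3.image_of_monotone_on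
    (f := fun v : DVar n m => toOT ord (Finsupp.single v 1)) (r' := (· ≤ ·))
    (by
      rintro ⟨θ₁, α₁⟩ - ⟨θ₂, α₂⟩ - ⟨hle, heq⟩
      dsimp at hle heq
      subst heq
      exact single_le_single ord α₁ hle)
  rw [Set.univ_prod_univ, Set.image_univ] at h4
  have hset : {x : OT n m ord | ∃ v : DVar n m, x = toOT ord (Finsupp.single v 1)} =
      Set.range (fun v : DVar n m => toOT ord (Finsupp.single v 1)) := by
    ext x
    constructor
    · rintro ⟨v, rfl⟩; exact ⟨v, rfl⟩
    · rintro ⟨v, rfl⟩; exact ⟨v, rfl⟩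
  rw [hset]
  exact h4

lemma ord_wf (ord : Admissible n m) : WellFounded ord.lt := by
  have hgen := genset_isPWO ord
  have hpos : ∀ x ∈ {x : OT n m ord | ∃ v : DVar n m, x = toOT ord (Finsupp.single v 1)}, 0 ≤ x := by
    rintro x ⟨v, rfl⟩
    have hne : (Finsupp.single v 1 : DMon n m) ≠ 0 := fun h =>
      one_ne_zero (Finsupp.single_eq_zero.mp h)
    exact (ot_le_def ord _ _).mpr (Or.inl (ord.pos _ hne))
  have hc := hgen.addSubmonoid_closure hpos
  have hall : ∀ x : OT n m ord,
      x ∈ AddSubmonoid.closure {x : OT n m ord | ∃ v : DVar n m, x = toOT ord (Finsupp.single v 1)} := by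
    intro x
    refine Finsupp.induction (motive := fun y : DMon n m =>
      toOT ord y ∈ AddSubmonoid.closure
        {x : OT n m ord | ∃ v : DVar n m, x = toOT ord (Finsupp.single v 1)})
      x ?_ ?_
    · exact AddSubmonoid.zero_mem _
    · intro a b f _ _ ih
      refine AddSubmonoid.add_mem _ ?_ ih
      have hb : (Finsupp.single a b : DMon n m) = b • Finsupp.single a 1 := by
        rw [Finsupp.smul_single]
        simp
      rw [hb]
      have hmem : toOT ord (Finsupp.single a 1) ∈
          {x : OT n m ord | ∃ v : DVar n m, x = toOT ord (Finsupp.single v 1)} := ⟨a, rfl⟩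
      exact nsmul_mem (AddSubmonoid.subset_closure hmem) b
  have huniv : (Set.univ : Set (OT n m ord)).IsPWO :=
    hc.mono (fun x _ => hall x)
  have hwf := (Set.isWF_univ_iff).mp huniv.isWF
  exact hwf.wf

lemma exists_ord_max (ord : Admissible n m) (s : Finset (DMon n m)) (hs : s.Nonempty) :
    ∃ w ∈ s, ∀ u ∈ s, u ≠ w → ord.lt u w := by
  obtain ⟨b, hb, hmax⟩ := s.exists_max_image (toOT ord) hs
  refine ⟨b, hb, fun u hu hne => ?_⟩
  rcases (ot_le_def ord _ _).mp (hmax u hu) with h | h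
  · exact h
  · exact absurd h hne


open MvPolynomial

variable {K : Type} [Field K]

lemma sigmaR_eq_map_rename {n m : ℕ} (σK : Shift n → (K →+* K)) (θ : Shift n)
    (f : MvPolynomial (DVar n m) K) :
    sigmaR σK θ f = MvPolynomial.map (σK θ) (MvPolynomial.rename (shiftV θ) f) := by
  have h : (sigmaR σK θ : MvPolynomial (DVar n m) K →+* MvPolynomial (DVar n m) K) =
      (MvPolynomial.map (σK θ)).comp (MvPolynomial.rename (shiftV θ) :
        MvPolynomial (DVar n m) K →ₐ[K] MvPolynomial (DVar n m) K).toRingHom := by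
    apply MvPolynomial.ringHom_ext
    · intro a
      simp [sigmaR]
    · intro v
      simp [sigmaR]
  exact DFunLike.congr_fun h f

lemma coeff_sigmaR {n m : ℕ} (σK : Shift n → (K →+* K)) (θ : Shift n)
    (f : MvPolynomial (DVar n m) K) (u : DMon n m) :
    (sigmaR σK θ f).coeff (shiftM θ u) = σK θ (f.coeff u) := by
  rw [sigmaR_eq_map_rename, MvPolynomial.coeff_map]
  show σK θ (coeff (Finsupp.mapDomain (shiftV θ) u) (rename (shiftV θ) f)) = _
  rw [MvPolynomial.coeff_rename_mapDomain _ (shiftV_injective θ)]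

lemma support_sigmaR {n m : ℕ} (σK : Shift n → (K →+* K)) (θ : Shift n)
    (f : MvPolynomial (DVar n m) K) :
    (sigmaR σK θ f).support = f.support.image (shiftM θ) := by
  classical
  rw [sigmaR_eq_map_rename, MvPolynomial.support_map_of_injective _ (σK θ).injective,
    MvPolynomial.support_rename_of_injective (shiftV_injective θ)]
  rfl

lemma isLm_unique {n m : ℕ} (ord : Admissible n m) {f : MvPolynomial (DVar n m) K}
    {w1 w2 : DMon n m} (h1 : IsLm ord f w1) (h2 : IsLm ord f w2) : w1 = w2 := by
  by_contra hne
  exact ord.irrefl _ (ord.trans _ _ _ (h2.2 w1 h1.1 hne) (h1.2 w2 h2.1 (Ne.symm hne)))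

lemma exists_isLm {n m : ℕ} (ord : Admissible n m) {f : MvPolynomial (DVar n m) K}
    (hf : f ≠ 0) : ∃ w, IsLm ord f w := by
  have hne : f.support.Nonempty :=
    Finset.nonempty_iff_ne_empty.mpr (fun h => hf (MvPolynomial.support_eq_empty.mp h))
  obtain ⟨w, hw, hmax⟩ := exists_ord_max ord f.support hne
  exact ⟨w, hw, hmax⟩

lemma coeff_shift_prod_at {n m : ℕ} (σK : Shift n → (K →+* K)) (t : DMon n m) (θ : Shift n)
    (c : K) (q : MvPolynomial (DVar n m) K) (u : DMon n m) :
    (MvPolynomial.monomial t c * sigmaR σK θ q).coeff (t + shiftM θ u) =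
      c * σK θ (q.coeff u) := by
  rw [MvPolynomial.coeff_monomial_mul, coeff_sigmaR]

lemma coeff_shift_prod_ne {n m : ℕ} (σK : Shift n → (K →+* K)) (t : DMon n m) (θ : Shift n)
    (c : K) (q : MvPolynomial (DVar n m) K) (u : DMon n m)
    (h : (MvPolynomial.monomial t c * sigmaR σK θ q).coeff u ≠ 0) :
    ∃ u' ∈ q.support, u = t + shiftM θ u' := by
  classical
  rw [MvPolynomial.coeff_monomial_mul'] at h
  by_cases hle : t ≤ u
  · rw [if_pos hle] at h
    have h2 : (sigmaR σK θ q).coeff (u - t) ≠ 0 := fun hz => h (by rw [hz, mul_zero])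
    have h3 : u - t ∈ (sigmaR σK θ q).support := MvPolynomial.mem_support_iff.mpr h2
    rw [support_sigmaR] at h3
    obtain ⟨u', hu', heq⟩ := Finset.mem_image.mp h3
    refine ⟨u', hu', ?_⟩
    rw [heq]
    exact (add_tsub_cancel_of_le hle).symm
  · rw [if_neg hle] at h
    exact absurd rfl h


/-- Auxiliary: the monomial `w` is reducible modulo `F`. -/
def RedM {n m : ℕ} {K : Type} [Field K] (ord : Admissible n m)
    (F : Set (MvPolynomial (DVar n m) K)) (w : DMon n m) : Prop :=
  ∃ q ∈ F, ∃ lq, IsLm ord q lq ∧ MDvd lq w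


/-- Ideal membership via normal forms: if `G` is a standard basis of the difference
ideal `I` w.r.t. an admissible ordering, then `f ∈ I` iff `0` is a normal form of `f`
modulo `G`; equivalently, `f ∈ I` exactly when every normal form of `f` modulo `G`
equals `0`. -/
theorem membership_via_normal_forms (n m : ℕ) (hn : 1 ≤ n) (hm : 1 ≤ m)
    (K : Type) [Field K] (σK : Shift n → (K →+* K))
    (hσ0 : σK 0 = RingHom.id K)
    (hσadd : ∀ a b : Shift n, σK (a + b) = (σK a).comp (σK b))
    (ord : Admissible n m)
    (I : Ideal (MvPolynomial (DVar n m) K)) (hI : IsDiffIdeal σK I)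
    (G : Set (MvPolynomial (DVar n m) K))
    (hGI : G ⊆ (I : Set (MvPolynomial (DVar n m) K)))
    (hG : ∀ g ∈ G, g ≠ 0 ∧ IsMonicP ord g)
    (hSB : IsStandardBasis σK ord G I) :
    ∀ f : MvPolynomial (DVar n m) K,
      (f ∈ I ↔ IsNormalFormOf σK ord G f 0) ∧
      (f ∈ I ↔ ∀ r, IsNormalFormOf σK ord G f r → r = 0) := by
  classical
  have hσmem : ∀ (θ : Shift n) (q : MvPolynomial (DVar n m) K), q ∈ G → sigmaR σK θ q ∈ I := by
    intro θ q hq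
    rw [← hSB.1]
    exact Ideal.subset_span ⟨θ, q, hq, rfl⟩
  have hstep_mem : ∀ p r, RedStep σK ord G p r → p - r ∈ I := by
    rintro p r ⟨q, hq, lq, hlq, t, θ, hsup, rfl⟩
    rw [sub_sub_cancel]
    exact Ideal.mul_mem_left _ _ (hσmem θ q hq)
  have hrtg_mem : ∀ p r, Relation.ReflTransGen (RedStep σK ord G) p r → p - r ∈ I := by
    intro p r h
    induction h with
    | refl => simpa using I.zero_mem
    | @tail b c hab hbc ih =>
      have h1 := hstep_mem _ _ hbc
      have h2 := I.add_mem ih h1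
      rwa [sub_add_sub_cancel] at h2
  have hkey : ∀ (p : MvPolynomial (DVar n m) K) (w : DMon n m), w ∈ p.support →
      RedM ord G w → (∀ u ∈ p.support, RedM ord G u → u = w ∨ ord.lt u w) →
      ∃ r, RedStep σK ord G p r ∧ ∀ u ∈ r.support, RedM ord G u → ord.lt u w := by
    intro p w hw hredw hmax
    obtain ⟨q, hq, lq, hlq, t, θ, heq⟩ := hredw
    subst heq
    set c := p.coeff (t + shiftM θ lq) with hc
    refine ⟨p - MvPolynomial.monomial t c * sigmaR σK θ q,
      ⟨q, hq, lq, hlq, t, θ, hw, rfl⟩, ?_⟩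
    have hmonic : q.coeff lq = 1 := by
      obtain ⟨-, w0, hw0, hcoef⟩ := hG q hq
      rwa [isLm_unique ord hlq hw0]
    have hB1 : (MvPolynomial.monomial t c * sigmaR σK θ q).coeff (t + shiftM θ lq) = c := by
      rw [coeff_shift_prod_at, hmonic, map_one, mul_one]
    intro u hu hredu
    have hcu : (p - MvPolynomial.monomial t c * sigmaR σK θ q).coeff u ≠ 0 :=
      MvPolynomial.mem_support_iff.mp hu
    rw [MvPolynomial.coeff_sub] at hcu
    have hneq : u ≠ t + shiftM θ lq := by
      rintro rfl
      rw [hB1, ← hc, sub_self] at hcu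
      exact hcu rfl
    rcases ord.trichotomy u (t + shiftM θ lq) with h | h | h
    · exact h
    · exact absurd h hneq
    · exfalso
      have hg0 : (MvPolynomial.monomial t c * sigmaR σK θ q).coeff u = 0 := by
        by_contra hg
        obtain ⟨u', hu', rfl⟩ := coeff_shift_prod_ne σK t θ c q u hg
        rcases eq_or_ne u' lq with rfl | hne'
        · exact hneq rfl
        · exact ord.irrefl _
            (ord.trans _ _ _ ((ord.compat u' lq t θ).mp (hlq.2 u' hu' hne')) h)
      rw [hg0, sub_zero] at hcu
      rcases hmax u (MvPolynomial.mem_support_iff.mpr hcu) hredu with rfl | h'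
      · exact hneq rfl
      · exact ord.irrefl _ (ord.trans _ _ _ h h')
  have hnf_exists : ∀ p : MvPolynomial (DVar n m) K,
      ∃ r, Relation.ReflTransGen (RedStep σK ord G) p r ∧ InNormalForm ord G r := by
    have main : ∀ w : DMon n m, ∀ p : MvPolynomial (DVar n m) K,
        (∀ u ∈ p.support, RedM ord G u → u = w ∨ ord.lt u w) →
        ∃ r, Relation.ReflTransGen (RedStep σK ord G) p r ∧ InNormalForm ord G r := by
      intro w
      refine (ord_wf ord).induction (C := fun w => ∀ p : MvPolynomial (DVar n m) K,
        (∀ u ∈ p.support, RedM ord G u → u = w ∨ ord.lt u w) →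
        ∃ r, Relation.ReflTransGen (RedStep σK ord G) p r ∧ InNormalForm ord G r) w ?_
      clear w
      intro w IH p hbound
      by_cases hred : ∃ u ∈ p.support, RedM ord G u
      · obtain ⟨u0, hu0, hredu0⟩ := hred
        set S := p.support.filter (fun u => RedM ord G u) with hS
        have hSne : S.Nonempty := ⟨u0, Finset.mem_filter.mpr ⟨hu0, hredu0⟩⟩
        obtain ⟨ws, hwsS, hwsmax⟩ := exists_ord_max ord S hSne
        have hwssup : ws ∈ p.support := (Finset.mem_filter.mp hwsS).1
        have hredws : RedM ord G ws := (Finset.mem_filter.mp hwsS).2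
        have hmax : ∀ u ∈ p.support, RedM ord G u → u = ws ∨ ord.lt u ws := by
          intro u hu hr
          rcases eq_or_ne u ws with rfl | hne
          · exact Or.inl rfl
          · exact Or.inr (hwsmax u (Finset.mem_filter.mpr ⟨hu, hr⟩) hne)
        rcases hbound ws hwssup hredws with heqw | hltw
        · subst heqw
          obtain ⟨r, hstepr, hrbound⟩ := hkey p ws hwssup hredws hmax
          by_cases hred2 : ∃ u ∈ r.support, RedM ord G u
          · obtain ⟨u1, hu1, hru1⟩ := hred2
            set S2 := r.support.filter (fun u => RedM ord G u) with hS2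
            have hS2ne : S2.Nonempty := ⟨u1, Finset.mem_filter.mpr ⟨hu1, hru1⟩⟩
            obtain ⟨w2, hw2S, hw2max⟩ := exists_ord_max ord S2 hS2ne
            have hw2sup : w2 ∈ r.support := (Finset.mem_filter.mp hw2S).1
            have hredw2 : RedM ord G w2 := (Finset.mem_filter.mp hw2S).2
            have hbound2 : ∀ u ∈ r.support, RedM ord G u → u = w2 ∨ ord.lt u w2 := by
              intro u hu hr2
              rcases eq_or_ne u w2 with rfl | hne
              · exact Or.inl rfl
              · exact Or.inr (hw2max u (Finset.mem_filter.mpr ⟨hu, hr2⟩) hne)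
            obtain ⟨r2, hrtg2, hnf2⟩ := IH w2 (hrbound w2 hw2sup hredw2) r hbound2
            exact ⟨r2, Relation.ReflTransGen.head hstepr hrtg2, hnf2⟩
          · push_neg at hred2
            exact ⟨r, Relation.ReflTransGen.single hstepr,
              fun u hu h => hred2 u hu h⟩
        · exact IH ws hltw p hmax
      · push_neg at hred
        exact ⟨p, Relation.ReflTransGen.refl, fun u hu h => hred u hu h⟩
    intro p
    by_cases hred : ∃ u ∈ p.support, RedM ord G u
    · obtain ⟨u0, hu0, hredu0⟩ := hred
      set S := p.support.filter (fun u => RedM ord G u) with hS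
      have hSne : S.Nonempty := ⟨u0, Finset.mem_filter.mpr ⟨hu0, hredu0⟩⟩
      obtain ⟨ws, hwsS, hwsmax⟩ := exists_ord_max ord S hSne
      refine main ws p ?_
      intro u hu hr
      rcases eq_or_ne u ws with rfl | hne
      · exact Or.inl rfl
      · exact Or.inr (hwsmax u (Finset.mem_filter.mpr ⟨hu, hr⟩) hne)
    · push_neg at hred
      exact ⟨p, Relation.ReflTransGen.refl, fun u hu h => hred u hu h⟩
  have hnf_zero : ∀ f r, f ∈ I → IsNormalFormOf σK ord G f r → r = 0 := by
    rintro f r hf ⟨hrtg, hnf⟩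
    have hfr := hrtg_mem f r hrtg
    have hrI : r ∈ I := by
      have h2 := I.sub_mem hf hfr
      simpa using h2
    by_contra hr0
    obtain ⟨g, hg', lg, lf, hlg, hlf, hdvd⟩ := hSB.2 r hrI hr0
    exact hnf lf hlf.1 ⟨g, hg', lg, hlg, hdvd⟩
  intro f
  have lem2 : IsNormalFormOf σK ord G f 0 → f ∈ I := by
    rintro ⟨hrtg, -⟩
    have h := hrtg_mem f 0 hrtg
    simpa using h
  have lem1 : f ∈ I → IsNormalFormOf σK ord G f 0 := by
    intro hf
    obtain ⟨r, hrtg, hnf⟩ := hnf_exists f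
    have hr0 : r = 0 := hnf_zero f r hf ⟨hrtg, hnf⟩
    subst hr0
    exact ⟨hrtg, hnf⟩
  refine ⟨⟨lem1, lem2⟩, ⟨fun hf r hr => hnf_zero f r hf hr, fun h => ?_⟩⟩
  obtain ⟨r, hrtg, hnf⟩ := hnf_exists f
  have hr0 : r = 0 := h r ⟨hrtg, hnf⟩
  subst hr0
  exact lem2 ⟨hrtg, hnf⟩
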